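/- Polar decomposition of the transformed ODE (system (2.10) in the proof of Proposition 1.2). Let I ⊆ ℝ be an open interval and let w̄ : I → ℝ^m be a C² solution of w̄'' + |w̄|^{p−1} w̄ − c0 w̄ = 0 on I, with c0 = 4/(p−1)², such that w̄(ξ) ≠ 0 for all ξ ∈ I. Set r(ξ) = |w̄(ξ)|, Ω(ξ) = w̄(ξ)/|w̄(ξ)|, and H(ξ) = |Ω'(ξ)|². Then for all ξ ∈ I: r''(ξ) − r(ξ) H(ξ) − c0 r(ξ) + r(ξ)^p = 0 and 4 r'(ξ) H(ξ) + r(ξ) H'(ξ) = 0. -/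

import Mathlib

open MeasureTheory Real Set

/-- **Polar decomposition of the transformed ODE** (system (2.10) in the proof of
Proposition 1.2).  On an open interval where the `C²` solution `w̄` of
`w̄'' + |w̄|^{p-1}w̄ - c₀ w̄ = 0` does not vanish, the modulus `r = |w̄|`, the
direction `Ω = w̄/|w̄|` and `H = |Ω'|²` satisfy
`r'' - r H - c₀ r + rᵖ = 0` and `4 r' H + r H' = 0`. -/

private lemma normsq_aux {E : Type*} [NormedAddCommGroup E] [InnerProductSpace ℝ E]
    (w w' : E) (hw : w ≠ 0) :
    ‖‖w‖⁻¹ • w' + (-((inner ℝ w w' : ℝ) / ‖w‖) / ‖w‖ ^ 2) • w‖ ^ 2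
      = (inner ℝ w' w' : ℝ) / (inner ℝ w w : ℝ) - ((inner ℝ w w' : ℝ) / (inner ℝ w w : ℝ)) ^ 2 := by
  have hr : (0 : ℝ) < ‖w‖ := norm_pos_iff.mpr hw
  rw [← real_inner_self_eq_norm_sq]
  simp only [inner_add_left, inner_add_right, real_inner_smul_left, real_inner_smul_right]
  rw [real_inner_comm w' w, real_inner_self_eq_norm_sq w, real_inner_self_eq_norm_sq w']
  field_simp
  ring

theorem polar_decomposition (p : ℝ) (hp : 1 < p) (m : ℕ) (hm : 2 ≤ m)
    (I : Set ℝ) (hIo : IsOpen I) (hIc : I.OrdConnected)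
    (wb : ℝ → EuclideanSpace ℝ (Fin m))
    (hreg : ContDiffOn ℝ 2 wb I)
    (heq : ∀ ξ ∈ I,
      deriv (deriv wb) ξ + ‖wb ξ‖ ^ (p - 1) • wb ξ - (4 / (p - 1) ^ 2) • wb ξ = 0)
    (hne : ∀ ξ ∈ I, wb ξ ≠ 0) :
    (∀ ξ ∈ I,
      deriv (deriv (fun t => ‖wb t‖)) ξ
        - ‖wb ξ‖ * ‖deriv (fun t => ‖wb t‖⁻¹ • wb t) ξ‖ ^ 2
        - (4 / (p - 1) ^ 2) * ‖wb ξ‖ + ‖wb ξ‖ ^ p = 0) ∧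
    (∀ ξ ∈ I,
      4 * deriv (fun t => ‖wb t‖) ξ * ‖deriv (fun t => ‖wb t‖⁻¹ • wb t) ξ‖ ^ 2
        + ‖wb ξ‖ * deriv (fun t => ‖deriv (fun t' => ‖wb t'‖⁻¹ • wb t') t‖ ^ 2) ξ = 0) := by
  set c0 : ℝ := 4 / (p - 1) ^ 2 with hc0
  -- abbreviations
  set a : ℝ → ℝ := fun t => (inner ℝ (wb t) (wb t) : ℝ) with ha_def
  set b : ℝ → ℝ := fun t => (inner ℝ (wb t) (deriv wb t) : ℝ) with hb_def
  set cc : ℝ → ℝ := fun t => (inner ℝ (deriv wb t) (deriv wb t) : ℝ) with hcc_def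
  have hmem : ∀ ξ ∈ I, I ∈ nhds ξ := fun ξ h => hIo.mem_nhds h
  have hdiff : ∀ ξ ∈ I, HasDerivAt wb (deriv wb ξ) ξ := fun ξ hξ =>
    ((hreg.differentiableOn (by norm_num)).differentiableAt (hmem ξ hξ)).hasDerivAt
  have h1 : ContDiffOn ℝ 1 (deriv wb) I := hreg.deriv_of_isOpen hIo (by norm_num)
  have hdiff' : ∀ ξ ∈ I, HasDerivAt (deriv wb) (deriv (deriv wb) ξ) ξ := fun ξ hξ =>
    ((h1.differentiableOn one_ne_zero).differentiableAt (hmem ξ hξ)).hasDerivAt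
  have hw'' : ∀ ξ ∈ I, deriv (deriv wb) ξ = (c0 - ‖wb ξ‖ ^ (p - 1)) • wb ξ := by
    intro ξ hξ
    have h := heq ξ hξ
    rw [sub_eq_zero] at h
    rw [sub_smul]
    exact eq_sub_of_add_eq h
  have hrpos : ∀ ξ ∈ I, (0 : ℝ) < ‖wb ξ‖ := fun ξ hξ => norm_pos_iff.mpr (hne ξ hξ)
  have ha_eq : ∀ t, a t = ‖wb t‖ ^ 2 := fun t => real_inner_self_eq_norm_sq _
  have hapos : ∀ ξ ∈ I, (0 : ℝ) < a ξ := by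
    intro ξ hξ; rw [ha_eq]; have := hrpos ξ hξ; positivity
  -- derivatives of the scalar products
  have hA : ∀ ξ ∈ I, HasDerivAt a (2 * b ξ) ξ := by
    intro ξ hξ
    have h : HasDerivAt a _ ξ := (hdiff ξ hξ).inner (𝕜 := ℝ) (hdiff ξ hξ)
    convert h using 1
    simp only [hb_def]
    rw [real_inner_comm (deriv wb ξ) (wb ξ)]
    ring
  have hB : ∀ ξ ∈ I, HasDerivAt b (cc ξ + (c0 - ‖wb ξ‖ ^ (p - 1)) * a ξ) ξ := by
    intro ξ hξ
    have h : HasDerivAt b _ ξ := (hdiff ξ hξ).inner (𝕜 := ℝ) (hdiff' ξ hξ)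
    rw [hw'' ξ hξ] at h
    convert h using 1
    rw [real_inner_smul_right]
    simp only [hcc_def, ha_def]
    ring
  have hC : ∀ ξ ∈ I, HasDerivAt cc (2 * ((c0 - ‖wb ξ‖ ^ (p - 1)) * b ξ)) ξ := by
    intro ξ hξ
    have h : HasDerivAt cc _ ξ := (hdiff' ξ hξ).inner (𝕜 := ℝ) (hdiff' ξ hξ)
    rw [hw'' ξ hξ] at h
    convert h using 1
    simp only [hb_def, real_inner_smul_left, real_inner_smul_right,
      real_inner_comm (deriv wb ξ) (wb ξ)]
    ring
  -- derivative of the modulus r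
  have hr_eq : (fun t => ‖wb t‖) = fun t => Real.sqrt (a t) :=
    funext fun t => norm_eq_sqrt_real_inner _
  have hdr : ∀ ξ ∈ I, HasDerivAt (fun t => ‖wb t‖) (b ξ / ‖wb ξ‖) ξ := by
    intro ξ hξ
    have h := (hA ξ hξ).sqrt (ne_of_gt (hapos ξ hξ))
    rw [hr_eq]
    convert h using 1
    rw [show Real.sqrt (a ξ) = ‖wb ξ‖ by rw [ha_eq]; exact Real.sqrt_sq (norm_nonneg _)]
    have := hrpos ξ hξ
    field_simp
  have hdrEq : Set.EqOn (deriv fun t => ‖wb t‖) (fun t => b t / ‖wb t‖) I :=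
    fun ξ hξ => (hdr ξ hξ).deriv
  -- derivative of the direction Ω
  have hΩ : ∀ ξ ∈ I, HasDerivAt (fun t => ‖wb t‖⁻¹ • wb t)
      (‖wb ξ‖⁻¹ • deriv wb ξ + (-(b ξ / ‖wb ξ‖) / ‖wb ξ‖ ^ 2) • wb ξ) ξ := by
    intro ξ hξ
    have hinv : HasDerivAt (fun t => ‖wb t‖⁻¹)
        (-(b ξ / ‖wb ξ‖) / ‖wb ξ‖ ^ 2) ξ := (hdr ξ hξ).inv (ne_of_gt (hrpos ξ hξ))
    exact hinv.smul (hdiff ξ hξ)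
  -- value of H = ‖Ω'‖²
  have hHval : ∀ ξ ∈ I, ‖deriv (fun t => ‖wb t‖⁻¹ • wb t) ξ‖ ^ 2
      = cc ξ / a ξ - (b ξ / a ξ) ^ 2 := by
    intro ξ hξ
    rw [(hΩ ξ hξ).deriv]
    simp only [hb_def, hcc_def, ha_def]
    exact normsq_aux (wb ξ) (deriv wb ξ) (hne ξ hξ)
  have hHEq : Set.EqOn (fun t => ‖deriv (fun t' => ‖wb t'‖⁻¹ • wb t') t‖ ^ 2)
      (fun t => cc t / a t - (b t / a t) ^ 2) I := fun ξ hξ => hHval ξ hξ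
  -- the power identity
  have hKr : ∀ ξ ∈ I, ‖wb ξ‖ ^ (p - 1) * ‖wb ξ‖ = ‖wb ξ‖ ^ p := by
    intro ξ hξ
    rw [Real.rpow_sub_one (ne_of_gt (hrpos ξ hξ))]
    exact div_mul_cancel₀ _ (ne_of_gt (hrpos ξ hξ))
  constructor
  · -- first equation
    intro ξ hξ
    have hr := hrpos ξ hξ
    have ha2 : a ξ = ‖wb ξ‖ ^ 2 := ha_eq ξ
    -- second derivative of r
    have hev : (deriv fun t => ‖wb t‖) =ᶠ[nhds ξ] fun t => b t / ‖wb t‖ :=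
      Filter.eventuallyEq_of_mem (hmem ξ hξ) hdrEq
    rw [hev.deriv_eq]
    have hd2 : HasDerivAt (fun t => b t / ‖wb t‖)
        (((cc ξ + (c0 - ‖wb ξ‖ ^ (p - 1)) * a ξ) * ‖wb ξ‖ - b ξ * (b ξ / ‖wb ξ‖))
          / ‖wb ξ‖ ^ 2) ξ :=
      (hB ξ hξ).div (hdr ξ hξ) (ne_of_gt hr)
    rw [hd2.deriv, hHval ξ hξ]
    rw [← hKr ξ hξ, ha2]
    field_simp
    ring
  · -- second equation
    intro ξ hξ
    have hr := hrpos ξ hξ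
    have ha := hapos ξ hξ
    have ha2 : a ξ = ‖wb ξ‖ ^ 2 := ha_eq ξ
    have hev : (fun t => ‖deriv (fun t' => ‖wb t'‖⁻¹ • wb t') t‖ ^ 2)
        =ᶠ[nhds ξ] fun t => cc t / a t - (b t / a t) ^ 2 :=
      Filter.eventuallyEq_of_mem (hmem ξ hξ) hHEq
    rw [hev.deriv_eq, hdrEq hξ, hHval ξ hξ]
    have hd1 : HasDerivAt (fun t => cc t / a t)
        ((2 * ((c0 - ‖wb ξ‖ ^ (p - 1)) * b ξ) * a ξ - cc ξ * (2 * b ξ)) / a ξ ^ 2) ξ :=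
      (hC ξ hξ).div (hA ξ hξ) (ne_of_gt ha)
    have hd2 : HasDerivAt (fun t => b t / a t)
        (((cc ξ + (c0 - ‖wb ξ‖ ^ (p - 1)) * a ξ) * a ξ - b ξ * (2 * b ξ)) / a ξ ^ 2) ξ :=
      (hB ξ hξ).div (hA ξ hξ) (ne_of_gt ha)
    have hd3 : HasDerivAt (fun t => cc t / a t - (b t / a t) ^ 2)
        ((2 * ((c0 - ‖wb ξ‖ ^ (p - 1)) * b ξ) * a ξ - cc ξ * (2 * b ξ)) / a ξ ^ 2
          - 2 * (b ξ / a ξ) ^ 1 *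
            (((cc ξ + (c0 - ‖wb ξ‖ ^ (p - 1)) * a ξ) * a ξ - b ξ * (2 * b ξ)) / a ξ ^ 2)) ξ := by
      have := hd1.sub (hd2.pow 2)
      simp at this ⊢
      exact this
    rw [hd3.deriv]
    rw [ha2]
    field_simp
    ring
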